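/- Let k ≥ 2 and let P, Q be disjoint finite sets of integers such that for every prime p the residues of P modulo p^k do not cover ℤ/p^kℤ. Then there exist infinitely many integers t such that every element of P + t is k-free and no element of Q + t is k-free. -/

import Mathlib

/-- An integer `n` is `k`-free if `q^k ∤ n` for every prime `q`. -/
def KFree (k : ℕ) (n : ℤ) : Prop := ∀ q : ℕ, q.Prime → ¬ ((q : ℤ)^k ∣ n)

open Finset




/-- Counting integers in `(S, 2S]` in a fixed residue class mod `m`. -/
lemma card_filter_mod_le (S m c : ℕ) (hm : 0 < m) :
    (((Finset.Ioc S (2*S)).filter (fun s => s % m = c)).card) ≤ S / m + 2 := by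
  classical
  have hinj : Set.InjOn (fun s => s / m)
      ((Finset.Ioc S (2*S)).filter (fun s => s % m = c) : Finset ℕ) := by
    intro x hx y hy hxy
    simp only [coe_filter, Set.mem_setOf_eq, Finset.mem_Ioc] at hx hy
    simp only at hxy
    have h1 := Nat.div_add_mod x m
    have h2 := Nat.div_add_mod y m
    rw [hxy, hx.2] at h1
    rw [hy.2] at h2
    exact h1.symm.trans h2
  have hmaps : ∀ a ∈ (Finset.Ioc S (2*S)).filter (fun s => s % m = c),
      a / m ∈ Finset.Icc (S / m) (2*S / m) := by
    intro a ha
    simp only [mem_filter, Finset.mem_Ioc] at ha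
    exact Finset.mem_Icc.mpr ⟨Nat.div_le_div_right ha.1.1.le, Nat.div_le_div_right ha.1.2⟩
  have h := Finset.card_le_card_of_injOn (fun s => s / m) hmaps hinj
  rw [Nat.card_Icc] at h
  have key : 2*S/m ≤ 2*(S/m) + 1 := by
    have := Nat.add_div (a := S) (b := S) hm
    have h2 : (S + S) = 2*S := by ring
    rw [h2] at this
    split_ifs at this <;> omega
  set A := 2*S/m with hA
  set B := S/m with hB
  omega


lemma div_succ_sq_add (Sq W : ℕ) (hW : 0 < W) :
    Sq/((W+1)*(W+1)) + Sq/(W+1) ≤ Sq/W := by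
  rw [Nat.le_div_iff_mul_le hW]
  set x := Sq/((W+1)*(W+1)) with hx
  set y := Sq/(W+1) with hy
  have hx' : x * ((W+1)*(W+1)) ≤ Sq := Nat.div_mul_le_self _ _
  have hy' : y * (W+1) ≤ Sq := Nat.div_mul_le_self _ _
  have h : ((x + y) * W) * (W+1) ≤ Sq * (W+1) := by nlinarith
  exact Nat.le_of_mul_le_mul_right h (Nat.succ_pos W)

lemma sum_div_sq_tele (Sq z : ℕ) (hz : 0 < z) :
    ∀ W, z ≤ W → (∑ n ∈ Finset.Ioc z W, Sq/(n*n)) + Sq/W ≤ Sq/z := by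
  refine Nat.le_induction ?_ ?_
  · simp
  · intro W hW ih
    rw [Finset.sum_Ioc_succ_top hW]
    have h2 := div_succ_sq_add Sq W (lt_of_lt_of_le hz hW)
    calc (∑ n ∈ Finset.Ioc z W, Sq/(n*n)) + Sq/((W+1)*(W+1)) + Sq/(W+1)
        = (∑ n ∈ Finset.Ioc z W, Sq/(n*n)) + (Sq/((W+1)*(W+1)) + Sq/(W+1)) := by ring
      _ ≤ (∑ n ∈ Finset.Ioc z W, Sq/(n*n)) + Sq/W := Nat.add_le_add_left h2 _
      _ ≤ Sq/z := ih

lemma sum_div_sq_le (Sq z W : ℕ) (hz : 0 < z) :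
    (∑ n ∈ Finset.Ioc z W, Sq/(n*n)) ≤ Sq/z := by
  rcases le_or_gt z W with h | h
  · exact le_trans (Nat.le_add_right _ _) (sum_div_sq_tele Sq z hz W h)
  · rw [Finset.Ioc_eq_empty (by omega)]
    simp

lemma prod_pow_coprime (k : ℕ) (s : Finset ℕ) (hs : ∀ ℓ' ∈ s, Nat.Prime ℓ')
    (ℓ : ℕ) (hℓ : Nat.Prime ℓ) (hns : ℓ ∉ s) :
    IsCoprime (∏ ℓ' ∈ s, ((ℓ' : ℤ))^k) ((ℓ : ℤ)^k) := by
  apply IsCoprime.prod_left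
  intro i hi
  apply IsCoprime.pow
  have : Nat.Coprime i ℓ := (Nat.coprime_primes (hs i hi) hℓ).mpr (by rintro rfl; exact hns hi)
  exact Nat.isCoprime_iff_coprime.mpr this

lemma crt_exists (k : ℕ) (a : ℕ → ℤ) :
    ∀ (s : Finset ℕ), (∀ ℓ ∈ s, Nat.Prime ℓ) →
      ∃ t : ℤ, ∀ ℓ ∈ s, ((ℓ:ℤ))^k ∣ t - a ℓ := by
  classical
  intro s
  induction s using Finset.induction_on with
  | empty => exact fun _ => ⟨0, by simp⟩
  | @insert ℓ s hns ih =>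
    intro hpr
    obtain ⟨t, ht⟩ := ih (fun ℓ' hℓ' => hpr ℓ' (Finset.mem_insert_of_mem hℓ'))
    have hℓp : Nat.Prime ℓ := hpr ℓ (Finset.mem_insert_self _ _)
    set Pr : ℤ := ∏ ℓ' ∈ s, ((ℓ' : ℤ))^k with hPr
    have hco : IsCoprime Pr ((ℓ:ℤ)^k) :=
      prod_pow_coprime k s (fun ℓ' h => hpr ℓ' (Finset.mem_insert_of_mem h)) ℓ hℓp hns
    obtain ⟨u, v, huv⟩ := hco
    refine ⟨t + Pr * (u * (a ℓ - t)), ?_⟩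
    intro ℓ' hmem
    rcases Finset.mem_insert.1 hmem with rfl | h'
    · have he : t + Pr * (u * (a ℓ' - t)) - a ℓ' = (a ℓ' - t) * (u * Pr - 1) := by ring
      rw [he]
      have he2 : u * Pr - 1 = -(v*(ℓ':ℤ)^k) := by linear_combination huv
      rw [he2]
      exact ⟨-((a ℓ' - t) * v), by ring⟩
    · have h1 : (ℓ':ℤ)^k ∣ t - a ℓ' := ht ℓ' h'
      have h2 : (ℓ':ℤ)^k ∣ Pr := Finset.dvd_prod_of_mem (fun x : ℕ => ((x:ℤ))^k) h'
      have he : t + Pr * (u * (a ℓ - t)) - a ℓ' = (t - a ℓ') + Pr * (u * (a ℓ - t)) := by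
        ring
      rw [he]
      exact dvd_add h1 (h2.mul_right _)



set_option maxHeartbeats 2000000 in
lemma exists_translate (k : ℕ) (hk : 2 ≤ k)
    (P Q : Finset ℤ) (hPQ : Disjoint P Q)
    (hP : ∀ p : ℕ, p.Prime →
      ¬ (∀ r : ZMod (p^k), ∃ q ∈ P, (q : ZMod (p^k)) = r))
    (b : ℤ) :
    ∃ t : ℤ, b < t ∧ (∀ p ∈ P, KFree k (p + t)) ∧ (∀ q ∈ Q, ¬ KFree k (q + t)) := by
  classical
  -- diameter bound
  set D : ℕ := 2 * ((P ∪ Q).sup fun x => x.natAbs) + 1 with hD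
  have hDlt : ∀ x ∈ P ∪ Q, ∀ y ∈ P ∪ Q, (x - y).natAbs < D := by
    intro x hx y hy
    have h1 : x.natAbs ≤ (P ∪ Q).sup (fun x => x.natAbs) := Finset.le_sup hx
    have h2 : y.natAbs ≤ (P ∪ Q).sup (fun x => x.natAbs) := Finset.le_sup hy
    have := Int.natAbs_sub_le x y
    omega
  -- assignment of primes to elements of Q
  set f : ℤ → ℕ := fun q =>
    if h : q ∈ Q then Nat.nth Nat.Prime (D + 1 + (Fintype.equivFin {x // x ∈ Q} ⟨q, h⟩ : Fin _))
    else 0 with hf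
  have hfp : ∀ q ∈ Q, (f q).Prime := by
    intro q hq
    simp only [hf, dif_pos hq]
    exact Nat.prime_nth_prime _
  have hfD : ∀ q ∈ Q, D < f q := by
    intro q hq
    simp only [hf, dif_pos hq]
    have := Nat.add_two_le_nth_prime (D + 1 + (Fintype.equivFin {x // x ∈ Q} ⟨q, hq⟩ : Fin _))
    omega
  have hfinj : ∀ q ∈ Q, ∀ q' ∈ Q, f q = f q' → q = q' := by
    intro q hq q' hq' hqq'
    simp only [hf, dif_pos hq, dif_pos hq'] at hqq'
    have hsm := (Nat.nth_strictMono Nat.infinite_setOf_prime).injective hqq'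
    have : (Fintype.equivFin {x // x ∈ Q} ⟨q, hq⟩ : Fin _)
        = (Fintype.equivFin {x // x ∈ Q} ⟨q', hq'⟩ : Fin _) := by omega
    have := (Fintype.equivFin {x // x ∈ Q}).injective this
    exact congrArg Subtype.val this
  -- the threshold z and the modulus M
  set z : ℕ := max (4 * P.card + 4) (Q.sup f) with hz
  have hz4 : 4 * P.card + 4 ≤ z := le_max_left _ _
  have hz0 : 0 < z := by omega
  have hzf : ∀ q ∈ Q, f q ≤ z := fun q hq => le_trans (Finset.le_sup hq) (le_max_right _ _)
  set Z : Finset ℕ := (Finset.range (z+1)).filter Nat.Prime with hZ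
  have hZmem : ∀ ℓ, ℓ ∈ Z ↔ (ℓ ≤ z ∧ ℓ.Prime) := by
    intro ℓ
    simp only [hZ, Finset.mem_filter, Finset.mem_range]
    constructor
    · rintro ⟨h1, h2⟩; exact ⟨by omega, h2⟩
    · rintro ⟨h1, h2⟩; exact ⟨by omega, h2⟩
  set M : ℕ := ∏ ℓ ∈ Z, ℓ^k with hM
  have hM1 : 1 ≤ M := by
    rw [hM, Nat.one_le_iff_ne_zero, ← Nat.pos_iff_ne_zero]
    apply Finset.prod_pos
    intro ℓ hℓ
    exact pow_pos ((hZmem ℓ).1 hℓ).2.pos k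
  have hMd : ∀ ℓ ∈ Z, ℓ^k ∣ M := fun ℓ h => Finset.dvd_prod_of_mem (fun x => x^k) h
  have hcoM : ∀ ℓ : ℕ, ℓ.Prime → z < ℓ → IsCoprime ((M:ℤ)) ((ℓ:ℤ)^k) := by
    intro ℓ hℓ hzℓ
    have : ((M:ℕ):ℤ) = ∏ ℓ' ∈ Z, ((ℓ':ℤ))^k := by
      rw [hM]; push_cast; ring
    rw [this]
    apply prod_pow_coprime k Z (fun ℓ' h => ((hZmem ℓ').1 h).2) ℓ hℓ
    intro hmem
    exact absurd ((hZmem ℓ).1 hmem).1 (by omega)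
  -- choice of residues
  have haux : ∀ ℓ : ℕ, ∃ aℓ : ℤ, ℓ ∈ Z →
      ((∀ p ∈ P, ¬ ((ℓ:ℤ)^k ∣ p + aℓ)) ∧ (∀ q ∈ Q, f q = ℓ → ((ℓ:ℤ)^k ∣ q + aℓ))) := by
    intro ℓ
    by_cases hmem : ℓ ∈ Z
    swap
    · exact ⟨0, fun h => absurd h hmem⟩
    obtain ⟨hℓz, hℓp⟩ := (hZmem ℓ).1 hmem
    have hℓ1 : 1 ≤ ℓ := hℓp.pos
    have hℓk : ℓ ≤ ℓ^k := Nat.le_self_pow (by omega) ℓ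
    by_cases hq : ∃ q ∈ Q, f q = ℓ
    · obtain ⟨q0, hq0, hfq0⟩ := hq
      refine ⟨-q0, fun _ => ⟨?_, ?_⟩⟩
      · intro p hp hdvd
        have hpq : p ≠ q0 := fun h => (Finset.disjoint_left.1 hPQ hp) (h ▸ hq0)
        have hne : p - q0 ≠ 0 := sub_ne_zero.mpr hpq
        have hdvd' : ((ℓ^k : ℕ) : ℤ) ∣ (p - q0) := by
          push_cast [sub_eq_add_neg]
          exact hdvd
        have h1 : (ℓ^k : ℕ) ∣ (p - q0).natAbs := Int.natCast_dvd.mp hdvd'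
        have h2 : ℓ^k ≤ (p - q0).natAbs :=
          Nat.le_of_dvd (Int.natAbs_pos.mpr hne) h1
        have h3 : (p - q0).natAbs < D :=
          hDlt p (Finset.mem_union_left _ hp) q0 (Finset.mem_union_right _ hq0)
        have h4 : D < f q0 := hfD q0 hq0
        omega
      · intro q hq' hfq
        have : q = q0 := hfinj q hq' q0 hq0 (by rw [hfq, hfq0])
        subst this
        simp
    · push_neg at hq
      have := hP ℓ hℓp
      push_neg at this
      obtain ⟨r, hr⟩ := this
      refine ⟨-(r.val : ℤ), fun _ => ⟨?_, ?_⟩⟩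
      · intro p hp hdvd
        haveI : NeZero (ℓ^k) := ⟨by positivity⟩
        have h0 : ((p + -(r.val : ℤ) : ℤ) : ZMod (ℓ^k)) = 0 := by
          rw [ZMod.intCast_zmod_eq_zero_iff_dvd]
          exact_mod_cast hdvd
        push_cast at h0
        have : (p : ZMod (ℓ^k)) = r := by
          have hrv : ((r.val : ℕ) : ZMod (ℓ^k)) = r := ZMod.natCast_zmod_val r
          rw [← hrv]
          linear_combination h0
        exact hr p hp this
      · intro q hq' hfq
        exact absurd hfq (hq q hq')
  choose a ha using haux
  -- CRT
  obtain ⟨t', ht'⟩ := crt_exists k a Z (fun ℓ h => ((hZmem ℓ).1 h).2)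
  set t0 : ℤ := t' % M with ht0def
  have hMz : (0:ℤ) < (M:ℤ) := by exact_mod_cast hM1
  have ht00 : 0 ≤ t0 := Int.emod_nonneg t' (by omega)
  have ht0M : t0 < M := Int.emod_lt_of_pos t' hMz
  have ht0 : ∀ ℓ ∈ Z, (ℓ:ℤ)^k ∣ t0 - a ℓ := by
    intro ℓ hℓ
    have h1 : (ℓ:ℤ)^k ∣ t' - a ℓ := ht' ℓ hℓ
    have h2 : ((ℓ:ℤ))^k ∣ (M:ℤ) := by
      have := hMd ℓ hℓ
      exact_mod_cast Int.natCast_dvd_natCast.mpr this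
    have h3 : t0 - a ℓ = (t' - a ℓ) - (M:ℤ) * (t' / M) := by
      rw [ht0def]
      have := Int.mul_ediv_add_emod t' (M:ℤ)
      linarith
    rw [h3]
    exact dvd_sub h1 (h2.mul_right _)
  -- key property A : small primes never divide p + t0 + M*s
  have keyA : ∀ s : ℤ, ∀ p ∈ P, ∀ ℓ ∈ Z, ¬ ((ℓ:ℤ)^k ∣ (p + (t0 + M*s))) := by
    intro s p hp ℓ hℓ hdvd
    apply (ha ℓ hℓ).1 p hp
    have h1 : (ℓ:ℤ)^k ∣ t0 - a ℓ := ht0 ℓ hℓ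
    have h2 : ((ℓ:ℤ))^k ∣ (M:ℤ) := by
      exact_mod_cast Int.natCast_dvd_natCast.mpr (hMd ℓ hℓ)
    have h3 : p + a ℓ = (p + (t0 + M*s)) - (t0 - a ℓ) - M*s := by ring
    rw [h3]
    exact dvd_sub (dvd_sub hdvd h1) (h2.mul_right _)
  -- key property B : q + t0 + M*s is divisible by (f q)^k
  have keyB : ∀ s : ℤ, ∀ q ∈ Q, ((f q : ℤ))^k ∣ (q + (t0 + M*s)) := by
    intro s q hq
    have hfZ : f q ∈ Z := (hZmem (f q)).2 ⟨hzf q hq, hfp q hq⟩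
    have h1 := (ha (f q) hfZ).2 q hq rfl
    have h2 : (f q:ℤ)^k ∣ t0 - a (f q) := ht0 _ hfZ
    have h3 : ((f q:ℤ))^k ∣ (M:ℤ) := by
      exact_mod_cast Int.natCast_dvd_natCast.mpr (hMd _ hfZ)
    have h4 : q + (t0 + M*s) = (q + a (f q)) + (t0 - a (f q)) + M*s := by ring
    rw [h4]
    exact dvd_add (dvd_add h1 h2) (h3.mul_right _)
  -- counting setup
  set c : ℕ := P.card with hc
  set C0 : ℕ := P.sup (fun p => p.natAbs) with hC0
  have hC0le : ∀ p ∈ P, p.natAbs ≤ C0 := fun p hp => Finset.le_sup hp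
  set t0n : ℕ := t0.toNat with ht0n
  have ht0nat : (t0n : ℤ) = t0 := Int.toNat_of_nonneg ht00
  set K : ℕ := C0 + t0n + 2*M + 1 with hK
  have hK1 : 1 ≤ K := by omega
  set S : ℕ := max (max (4*c+4) ((16*c*K)^2+1)) (max 4 (b.toNat+1)) with hS
  have hS4c : 4*c+4 ≤ S := le_trans (le_max_left _ _) (le_max_left _ _)
  have hSK : (16*c*K)^2+1 ≤ S := le_trans (le_max_right _ _) (le_max_left _ _)
  have hS4 : 4 ≤ S := le_trans (le_max_left _ _) (le_max_right _ _)
  have hSb : b.toNat+1 ≤ S := le_trans (le_max_right _ _) (le_max_right _ _)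
  set W : ℕ := Nat.sqrt (K*S) with hW
  set Bad : Finset ℕ := (Finset.Ioc S (2*S)).filter
    (fun s : ℕ => ∃ p ∈ P, ∃ ℓ : ℕ, ℓ.Prime ∧ z < ℓ ∧ (ℓ:ℤ)^k ∣ (p + (t0 + M*(s:ℤ)))) with hBad
  set Pr : Finset ℕ := (Finset.Ioc z W).filter Nat.Prime with hPr
  -- Bad is covered by the structured union
  have hsub : Bad ⊆ P.biUnion (fun p =>
      ((Finset.Ioc S (2*S)).filter (fun s : ℕ => p + (t0 + M*(s:ℤ)) = 0)) ∪
      Pr.biUnion (fun ℓ => (Finset.Ioc S (2*S)).filter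
        (fun s : ℕ => (ℓ:ℤ)^k ∣ (p + (t0 + M*(s:ℤ)))))) := by
    intro s hs
    rw [hBad, Finset.mem_filter] at hs
    obtain ⟨hsIoc, p, hp, ℓ, hℓp, hzℓ, hdvd⟩ := hs
    rw [Finset.mem_biUnion]
    refine ⟨p, hp, ?_⟩
    rw [Finset.mem_union]
    by_cases hn0 : p + (t0 + M*(s:ℤ)) = 0
    · exact Or.inl (Finset.mem_filter.mpr ⟨hsIoc, hn0⟩)
    right
    rw [Finset.mem_biUnion]
    have hs2S : s ≤ 2*S := (Finset.mem_Ioc.mp hsIoc).2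
    have hpC : |(p:ℤ)| ≤ (C0:ℤ) := by
      rw [Int.abs_eq_natAbs]
      exact_mod_cast hC0le p hp
    have hsle : ((s:ℤ)) ≤ 2*(S:ℤ) := by exact_mod_cast hs2S
    have hs0 : (0:ℤ) ≤ (s:ℤ) := Int.ofNat_nonneg s
    have hS1 : (1:ℤ) ≤ (S:ℤ) := by exact_mod_cast (by omega : 1 ≤ S)
    have hM1' : (1:ℤ) ≤ (M:ℤ) := by exact_mod_cast hM1
    have habs : |p + (t0 + M*(s:ℤ))| ≤ ((K*S : ℕ):ℤ) := by
      obtain ⟨hp1, hp2⟩ := abs_le.mp hpC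
      rw [abs_le]
      constructor
      · rw [hK]; push_cast [← ht0nat]; nlinarith
      · rw [hK]; push_cast [← ht0nat]; nlinarith
    have hdvd2 : (ℓ:ℤ)^k ∣ |p + (t0 + M*(s:ℤ))| := (dvd_abs _ _).mpr hdvd
    have hle : ((ℓ^k : ℕ):ℤ) ≤ ((K*S:ℕ):ℤ) := by
      refine le_trans (Int.le_of_dvd (abs_pos.mpr hn0) ?_) habs
      exact_mod_cast hdvd2
    have hlek : ℓ^k ≤ K*S := by exact_mod_cast hle
    have hℓW : ℓ ≤ W := by
      rw [hW]
      apply Nat.le_sqrt.mpr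
      calc ℓ * ℓ = ℓ^2 := (sq ℓ).symm
        _ ≤ ℓ^k := Nat.pow_le_pow_right hℓp.pos hk
        _ ≤ K*S := hlek
    exact ⟨ℓ, Finset.mem_filter.mpr ⟨Finset.mem_Ioc.mpr ⟨hzℓ, hℓW⟩, hℓp⟩,
      Finset.mem_filter.mpr ⟨hsIoc, hdvd⟩⟩
  -- cardinality of the zero sets
  have hzero_card : ∀ p : ℤ,
      ((Finset.Ioc S (2*S)).filter (fun s : ℕ => p + (t0 + M*(s:ℤ)) = 0)).card ≤ 1 := by
    intro p
    apply Finset.card_le_one.mpr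
    intro s1 h1 s2 h2
    rw [Finset.mem_filter] at h1 h2
    have hM0 : (M:ℤ) ≠ 0 := by positivity
    have heq : (M:ℤ)*(s1:ℤ) = (M:ℤ)*(s2:ℤ) := by linarith [h1.2, h2.2]
    exact_mod_cast mul_left_cancel₀ hM0 heq
  -- cardinality of the divisibility sets
  have hdiv_card : ∀ p : ℤ, ∀ ℓ ∈ Pr,
      ((Finset.Ioc S (2*S)).filter
        (fun s : ℕ => (ℓ:ℤ)^k ∣ (p + (t0 + M*(s:ℤ))))).card ≤ S/(ℓ*ℓ) + 2 := by
    intro p ℓ hℓ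
    rw [hPr, Finset.mem_filter, Finset.mem_Ioc] at hℓ
    obtain ⟨⟨hzℓ, hℓW⟩, hℓp⟩ := hℓ
    have hpow_pos : 0 < ℓ^k := pow_pos hℓp.pos k
    rcases Finset.eq_empty_or_nonempty ((Finset.Ioc S (2*S)).filter
        (fun s : ℕ => (ℓ:ℤ)^k ∣ (p + (t0 + M*(s:ℤ))))) with hF | hF
    · rw [hF]; simp
    obtain ⟨s0, hs0⟩ := hF
    have hco := hcoM ℓ hℓp hzℓ
    have hmod : ∀ s1 ∈ (Finset.Ioc S (2*S)).filter
        (fun s : ℕ => (ℓ:ℤ)^k ∣ (p + (t0 + M*(s:ℤ)))), s1 % (ℓ^k) = s0 % (ℓ^k) := by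
      intro s1 hs1
      rw [Finset.mem_filter] at hs1 hs0
      have hd : (ℓ:ℤ)^k ∣ (M:ℤ) * ((s1:ℤ) - (s0:ℤ)) := by
        have := dvd_sub hs1.2 hs0.2
        rw [show (M:ℤ) * ((s1:ℤ) - (s0:ℤ)) = p + (t0 + M*(s1:ℤ)) - (p + (t0 + M*(s0:ℤ))) by ring]
        exact this
      have hd2 : (ℓ:ℤ)^k ∣ ((s1:ℤ) - (s0:ℤ)) := (hco.symm).dvd_of_dvd_mul_left hd
      have : s0 ≡ s1 [MOD ℓ^k] := by
        rw [Nat.modEq_iff_dvd]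
        exact_mod_cast hd2
      exact this.symm
    have hsub2 : (Finset.Ioc S (2*S)).filter
        (fun s : ℕ => (ℓ:ℤ)^k ∣ (p + (t0 + M*(s:ℤ)))) ⊆
        (Finset.Ioc S (2*S)).filter (fun s : ℕ => s % (ℓ^k) = s0 % (ℓ^k)) := by
      intro s1 hs1
      rw [Finset.mem_filter]
      exact ⟨Finset.mem_filter.mp hs1 |>.1, hmod s1 hs1⟩
    calc ((Finset.Ioc S (2*S)).filter
        (fun s : ℕ => (ℓ:ℤ)^k ∣ (p + (t0 + M*(s:ℤ))))).card
        ≤ ((Finset.Ioc S (2*S)).filter (fun s : ℕ => s % (ℓ^k) = s0 % (ℓ^k))).card :=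
          Finset.card_le_card hsub2
      _ ≤ S/(ℓ^k) + 2 := card_filter_mod_le S (ℓ^k) _ hpow_pos
      _ ≤ S/(ℓ*ℓ) + 2 := by
          have h22 : ℓ*ℓ ≤ ℓ^k := by
            calc ℓ*ℓ = ℓ^2 := (sq ℓ).symm
              _ ≤ ℓ^k := Nat.pow_le_pow_right hℓp.pos hk
          exact Nat.add_le_add_right (Nat.div_le_div_left h22 (Nat.mul_pos hℓp.pos hℓp.pos)) 2
  -- total bound
  have hBadcard : Bad.card ≤ c * (1 + (S/z + 2*W)) := by
    calc Bad.card ≤ (P.biUnion (fun p =>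
        ((Finset.Ioc S (2*S)).filter (fun s : ℕ => p + (t0 + M*(s:ℤ)) = 0)) ∪
        Pr.biUnion (fun ℓ => (Finset.Ioc S (2*S)).filter
          (fun s : ℕ => (ℓ:ℤ)^k ∣ (p + (t0 + M*(s:ℤ))))))).card :=
        Finset.card_le_card hsub
      _ ≤ ∑ p ∈ P, (((Finset.Ioc S (2*S)).filter (fun s : ℕ => p + (t0 + M*(s:ℤ)) = 0)) ∪
          Pr.biUnion (fun ℓ => (Finset.Ioc S (2*S)).filter
            (fun s : ℕ => (ℓ:ℤ)^k ∣ (p + (t0 + M*(s:ℤ)))))).card := Finset.card_biUnion_le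
      _ ≤ ∑ _p ∈ P, (1 + (S/z + 2*W)) := ?_
      _ = c * (1 + (S/z + 2*W)) := by
          rw [Finset.sum_const, smul_eq_mul, hc]
    apply Finset.sum_le_sum
    intro p hp
    calc (((Finset.Ioc S (2*S)).filter (fun s : ℕ => p + (t0 + M*(s:ℤ)) = 0)) ∪
          Pr.biUnion (fun ℓ => (Finset.Ioc S (2*S)).filter
            (fun s : ℕ => (ℓ:ℤ)^k ∣ (p + (t0 + M*(s:ℤ)))))).card
        ≤ ((Finset.Ioc S (2*S)).filter (fun s : ℕ => p + (t0 + M*(s:ℤ)) = 0)).card +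
          (Pr.biUnion (fun ℓ => (Finset.Ioc S (2*S)).filter
            (fun s : ℕ => (ℓ:ℤ)^k ∣ (p + (t0 + M*(s:ℤ)))))).card := Finset.card_union_le _ _
      _ ≤ 1 + ∑ ℓ ∈ Pr, ((Finset.Ioc S (2*S)).filter
            (fun s : ℕ => (ℓ:ℤ)^k ∣ (p + (t0 + M*(s:ℤ))))).card :=
          Nat.add_le_add (hzero_card p) Finset.card_biUnion_le
      _ ≤ 1 + ∑ ℓ ∈ Pr, (S/(ℓ*ℓ) + 2) :=
          Nat.add_le_add_left (Finset.sum_le_sum (hdiv_card p)) 1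
      _ ≤ 1 + ∑ n ∈ Finset.Ioc z W, (S/(n*n) + 2) :=
          Nat.add_le_add_left (Finset.sum_le_sum_of_subset (Finset.filter_subset _ _)) 1
      _ ≤ 1 + (S/z + 2*W) := ?_
    apply Nat.add_le_add_left
    rw [Finset.sum_add_distrib, Finset.sum_const, smul_eq_mul, Nat.card_Ioc]
    have h1 := sum_div_sq_le S z W hz0
    have h2 : (W - z) * 2 ≤ 2*W := by omega
    omega
  -- final arithmetic : Bad.card < S
  have hb1 : c ≤ S/4 := Nat.le_div_iff_mul_le (by omega) |>.mpr (by omega)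
  have hb2 : c * (S/z) ≤ S/4 := by
    rcases Nat.eq_zero_or_pos c with hc0 | hc0
    · rw [hc0]; simp
    have h4cz : 4*c ≤ z := by omega
    calc c * (S/z) ≤ c * (S/(4*c)) :=
          Nat.mul_le_mul_left c (Nat.div_le_div_left h4cz (by omega))
      _ ≤ (c * S)/(4*c) := Nat.mul_div_le_mul_div_assoc _ _ _
      _ = S/4 := by rw [Nat.mul_comm 4 c]; exact Nat.mul_div_mul_left S 4 hc0
  have hb3 : 2*c*W ≤ S/4 := by
    have hsqS1 : 1 ≤ Nat.sqrt S := Nat.le_sqrt.mpr (by omega)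
    have hWle : W ≤ K*(Nat.sqrt S + 1) := by
      rw [hW]
      have hKS : K*S ≤ (K*(Nat.sqrt S + 1))*(K*(Nat.sqrt S + 1)) := by
        have h1 : S ≤ (Nat.sqrt S + 1)*(Nat.sqrt S + 1) := le_of_lt (Nat.lt_succ_sqrt S)
        calc K*S ≤ K*((Nat.sqrt S + 1)*(Nat.sqrt S + 1)) := Nat.mul_le_mul_left _ h1
          _ = (K*((Nat.sqrt S+1)*(Nat.sqrt S+1)))*1 := by ring
          _ ≤ (K*((Nat.sqrt S+1)*(Nat.sqrt S+1)))*K := Nat.mul_le_mul_left _ hK1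
          _ = (K*(Nat.sqrt S + 1))*(K*(Nat.sqrt S + 1)) := by ring
      calc Nat.sqrt (K*S) ≤ Nat.sqrt ((K*(Nat.sqrt S + 1))*(K*(Nat.sqrt S + 1))) :=
            Nat.sqrt_le_sqrt hKS
        _ = K*(Nat.sqrt S + 1) := Nat.sqrt_eq _
    have h16 : 16*c*K ≤ Nat.sqrt S := by
      apply Nat.le_sqrt.mpr
      nlinarith [hSK]
    have hsS : 16*c*K*(Nat.sqrt S) ≤ S := by
      calc 16*c*K*(Nat.sqrt S) ≤ Nat.sqrt S * Nat.sqrt S :=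
            Nat.mul_le_mul_right _ h16
        _ ≤ S := Nat.sqrt_le S
    rw [Nat.le_div_iff_mul_le (by omega : 0 < 4)]
    calc 2*c*W*4 ≤ 2*c*(K*(Nat.sqrt S + 1))*4 := by
          apply Nat.mul_le_mul_right
          exact Nat.mul_le_mul_left _ hWle
      _ ≤ 2*c*(K*(2*Nat.sqrt S))*4 := by
          apply Nat.mul_le_mul_right
          apply Nat.mul_le_mul_left
          apply Nat.mul_le_mul_left
          omega
      _ = 16*c*K*(Nat.sqrt S) := by ring
      _ ≤ S := hsS
  have hBadS : Bad.card < S := by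
    have e1 : Bad.card ≤ c + (c*(S/z) + 2*c*W) := by
      calc Bad.card ≤ c * (1 + (S/z + 2*W)) := hBadcard
        _ = c + (c*(S/z) + 2*c*W) := by ring
    have e2 : c + (c*(S/z) + 2*c*W) ≤ S/4 + (S/4 + S/4) :=
      Nat.add_le_add hb1 (Nat.add_le_add hb2 hb3)
    have e3 : S/4 + (S/4 + S/4) < S := by omega
    exact lt_of_le_of_lt (le_trans e1 e2) e3
  -- pick a good s
  have hsd : (Finset.Ioc S (2*S) \ Bad).Nonempty := by
    have hcard : (Finset.Ioc S (2*S)).card = S := by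
      rw [Nat.card_Ioc, Nat.two_mul, Nat.add_sub_cancel]
    rw [← Finset.card_pos, Finset.card_sdiff_of_subset (Finset.filter_subset _ _), hcard]
    exact Nat.sub_pos_of_lt hBadS
  obtain ⟨s, hsmem⟩ := hsd
  rw [Finset.mem_sdiff] at hsmem
  obtain ⟨hsIoc, hsBad⟩ := hsmem
  have hsS' : S < s := (Finset.mem_Ioc.mp hsIoc).1
  refine ⟨t0 + M*(s:ℤ), ?_, ?_, ?_⟩
  · have h1 : (b:ℤ) ≤ (b.toNat : ℤ) := Int.self_le_toNat b
    have h2 : ((b.toNat : ℕ):ℤ) < (S:ℤ) := by exact_mod_cast (by omega : b.toNat < S)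
    have h3 : (S:ℤ) < (s:ℤ) := by exact_mod_cast hsS'
    have h4 : (s:ℤ) ≤ (M:ℤ)*(s:ℤ) := by
      have hM1' : (1:ℤ) ≤ (M:ℤ) := by exact_mod_cast hM1
      nlinarith [Int.ofNat_nonneg s]
    linarith
  · intro p hp ℓ hℓp hdvd
    rcases le_or_gt ℓ z with hle | hlt
    · exact keyA (s:ℤ) p hp ℓ ((hZmem ℓ).2 ⟨hle, hℓp⟩) hdvd
    · apply hsBad
      rw [hBad, Finset.mem_filter]
      exact ⟨hsIoc, p, hp, ℓ, hℓp, hlt, hdvd⟩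
  · intro q hq hKF
    exact hKF (f q) (hfp q hq) (keyB (s:ℤ) q hq)

/-- If for every prime `p` the residues of `P` modulo `p^k` do not cover
`ℤ/p^kℤ`, then there are infinitely many `t` such that every element of `P + t`
is `k`-free and no element of `Q + t` is `k`-free. -/
theorem infinitely_many_translates (k : ℕ) (hk : 2 ≤ k)
    (P Q : Finset ℤ) (hPQ : Disjoint P Q)
    (hP : ∀ p : ℕ, p.Prime →
      ¬ (∀ r : ZMod (p^k), ∃ q ∈ P, (q : ZMod (p^k)) = r)) :
    {t : ℤ | (∀ p ∈ P, KFree k (p + t)) ∧ (∀ q ∈ Q, ¬ KFree k (q + t))}.Infinite := by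
  apply Set.infinite_of_not_bddAbove
  rintro ⟨b, hb⟩
  obtain ⟨t, hbt, h1, h2⟩ := exists_translate k hk P Q hPQ hP b
  exact absurd (hb (Set.mem_setOf.mpr ⟨h1, h2⟩)) (not_le.mpr hbt)
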